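/- Let G be a directed graph with V(G) = V(G_1) ∪ V(G_2) ∪ {x_k} (disjoint), such that there are no edges between V(G_1) and V(G_2). Then minrank_q(G_1) + minrank_q(G_2) ≤ minrank_q(G) ≤ minrank_q(G_1) + minrank_q(G_2) + 1. -/

import Mathlib

open Matrix Module

section Aux

variable {F : Type*} [Field F]

/-- sum-arrow linear equiv -/
def sumArrowLEquiv (F : Type*) [Field F] (n₁ n₂ : Type*) :
    ((n₁ ⊕ n₂) → F) ≃ₗ[F] (n₁ → F) × (n₂ → F) where
  toFun x := (x ∘ Sum.inl, x ∘ Sum.inr)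
  invFun p := Sum.elim p.1 p.2
  map_add' x y := rfl
  map_smul' c x := rfl
  left_inv x := by ext (i|i) <;> rfl
  right_inv p := rfl

lemma range_prodMap {R M M₂ M₃ M₄ : Type*} [CommRing R]
    [AddCommGroup M] [AddCommGroup M₂] [AddCommGroup M₃] [AddCommGroup M₄]
    [Module R M] [Module R M₂] [Module R M₃] [Module R M₄]
    (f : M →ₗ[R] M₃) (g : M₂ →ₗ[R] M₄) :
    LinearMap.range (f.prodMap g) = (LinearMap.range f).prod (LinearMap.range g) := by
  ext ⟨x, y⟩
  simp only [LinearMap.mem_range, Submodule.mem_prod, LinearMap.prodMap_apply, Prod.mk.injEq]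
  constructor
  · rintro ⟨⟨a, b⟩, h1, h2⟩
    exact ⟨⟨a, h1⟩, ⟨b, h2⟩⟩
  · rintro ⟨⟨a, h1⟩, ⟨b, h2⟩⟩
    exact ⟨(a, b), h1, h2⟩

/-- submodule prod equiv -/
def submoduleProdEquiv {R M M₂ : Type*} [CommRing R] [AddCommGroup M] [AddCommGroup M₂]
    [Module R M] [Module R M₂] (p : Submodule R M) (q : Submodule R M₂) :
    (p.prod q) ≃ₗ[R] p × q where
  toFun x := (⟨x.1.1, x.2.1⟩, ⟨x.1.2, x.2.2⟩)
  invFun y := ⟨(y.1.1, y.2.1), ⟨y.1.2, y.2.2⟩⟩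
  map_add' x y := rfl
  map_smul' c x := rfl
  left_inv x := rfl
  right_inv y := rfl

lemma finrank_submodule_prod {M M₂ : Type*} [AddCommGroup M] [AddCommGroup M₂]
    [Module F M] [Module F M₂] (p : Submodule F M) (q : Submodule F M₂)
    [FiniteDimensional F p] [FiniteDimensional F q] :
    finrank F (p.prod q) = finrank F p + finrank F q := by
  rw [(submoduleProdEquiv p q).finrank_eq, Module.finrank_prod]

lemma rank_fromBlocks_diag {n₁ n₂ m₁ m₂ : Type*} [Fintype n₁] [Fintype n₂]
    [Fintype m₁] [Fintype m₂]
    (A : Matrix n₁ m₁ F) (B : Matrix n₂ m₂ F) :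
    (Matrix.fromBlocks A 0 0 B).rank = A.rank + B.rank := by
  have key : (Matrix.fromBlocks A 0 0 B).mulVecLin =
      (sumArrowLEquiv F n₁ n₂).symm.toLinearMap ∘ₗ
        ((A.mulVecLin.prodMap B.mulVecLin) ∘ₗ (sumArrowLEquiv F m₁ m₂).toLinearMap) := by
    apply LinearMap.ext
    intro x
    simp only [Matrix.mulVecLin_apply, LinearMap.comp_apply, LinearEquiv.coe_coe,
      LinearMap.prodMap_apply, Matrix.fromBlocks_mulVec]
    show _ = Sum.elim _ _
    ext (i | i) <;>
      simp [sumArrowLEquiv, Matrix.mulVecLin_apply, Matrix.fromBlocks_mulVec] <;> rfl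
  rw [Matrix.rank, key, LinearMap.range_comp, LinearMap.range_comp,
    LinearEquiv.range, Submodule.map_top, LinearEquiv.finrank_map_eq,
    range_prodMap, finrank_submodule_prod]
  rfl

lemma rank_submatrix_le' {V l o : Type*} [Fintype V] [DecidableEq V] [Fintype l] [Fintype o]
    (f : l → V) (g : o → V) (A : Matrix V V F) :
    (A.submatrix f g).rank ≤ A.rank := by
  have h1 : A.submatrix f id = ((1 : Matrix V V F).submatrix f (Equiv.refl V)) * A := by
    rw [Matrix.one_submatrix_mul]
    rfl
  have h2 : A.submatrix f g = (A.submatrix f id) * ((1 : Matrix V V F).submatrix (Equiv.refl V) g) := by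
    rw [Matrix.mul_submatrix_one]
    simp [Matrix.submatrix_submatrix]
  calc (A.submatrix f g).rank ≤ (A.submatrix f id).rank := by
        rw [h2]; exact Matrix.rank_mul_le_left _ _
    _ ≤ A.rank := by rw [h1]; exact Matrix.rank_mul_le_right _ _

end Aux

/-- A matrix `A` fits a directed graph with edge relation `E` if it has 1's on the
diagonal and 0's at off-diagonal non-edges. -/
def Fits {V : Type*} {F : Type*} [Field F] (E : V → V → Prop)
    (A : Matrix V V F) : Prop :=
  (∀ v, A v v = 1) ∧ ∀ u v, u ≠ v → ¬ E u v → A u v = 0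

/-- The minrank over `F` of the directed graph with edge relation `E`. -/
noncomputable def minrank (F : Type*) [Field F] {V : Type*} [Fintype V]
    (E : V → V → Prop) : ℕ :=
  sInf {r | ∃ A : Matrix V V F, Fits E A ∧ A.rank = r}

section MinrankAux

variable {F : Type*} [Field F] {V : Type*} [Fintype V]

lemma fits_one [DecidableEq V] (E : V → V → Prop) : Fits E (1 : Matrix V V F) :=
  ⟨fun v => Matrix.one_apply_eq v, fun _ _ h _ => Matrix.one_apply_ne h⟩

lemma minrank_set_nonempty (E : V → V → Prop) :
    {r | ∃ A : Matrix V V F, Fits E A ∧ A.rank = r}.Nonempty := by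
  classical exact ⟨_, 1, fits_one E, rfl⟩

lemma minrank_le_of_fits {E : V → V → Prop} {A : Matrix V V F} (h : Fits E A) :
    minrank F E ≤ A.rank :=
  Nat.sInf_le ⟨A, h, rfl⟩

lemma exists_fits_rank_eq (E : V → V → Prop) :
    ∃ A : Matrix V V F, Fits E A ∧ A.rank = minrank F E :=
  Nat.sInf_mem (minrank_set_nonempty E)

end MinrankAux

theorem minrank_two_part_plus_vertex_bounds {V : Type*} [Fintype V] {F : Type*} [Field F]
    (E : V → V → Prop) (S₁ S₂ : Set V) (k : V)
    [DecidablePred (· ∈ S₁)] [DecidablePred (· ∈ S₂)]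
    (h12 : Disjoint S₁ S₂) (hk1 : k ∉ S₁) (hk2 : k ∉ S₂)
    (hcover : S₁ ∪ S₂ ∪ {k} = Set.univ)
    (hno : ∀ u ∈ S₁, ∀ v ∈ S₂, ¬ E u v ∧ ¬ E v u) :
    minrank F (fun u v : S₁ => E u.1 v.1) + minrank F (fun u v : S₂ => E u.1 v.1)
        ≤ minrank F E ∧
    minrank F E ≤ minrank F (fun u v : S₁ => E u.1 v.1)
        + minrank F (fun u v : S₂ => E u.1 v.1) + 1 := by
  classical
  have hne : ∀ (u : S₁) (v : S₂), (u : V) ≠ (v : V) := by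
    intro u v h
    exact Set.disjoint_left.mp h12 u.2 (h ▸ v.2)
  constructor
  · -- lower bound
    refine le_csInf (minrank_set_nonempty E) ?_
    rintro r ⟨A, hA, rfl⟩
    have fits1 : Fits (fun u v : S₁ => E u.1 v.1)
        (A.submatrix (Subtype.val : S₁ → V) Subtype.val) := by
      refine ⟨fun v => hA.1 v, fun u v huv hE => ?_⟩
      exact hA.2 u.1 v.1 (fun h => huv (Subtype.ext h)) hE
    have fits2 : Fits (fun u v : S₂ => E u.1 v.1)
        (A.submatrix (Subtype.val : S₂ → V) Subtype.val) := by
      refine ⟨fun v => hA.1 v, fun u v huv hE => ?_⟩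
      exact hA.2 u.1 v.1 (fun h => huv (Subtype.ext h)) hE
    have key : A.submatrix (Sum.elim (Subtype.val : S₁ → V) (Subtype.val : S₂ → V))
          (Sum.elim (Subtype.val : S₁ → V) (Subtype.val : S₂ → V)) =
        Matrix.fromBlocks (A.submatrix Subtype.val Subtype.val) 0 0
          (A.submatrix Subtype.val Subtype.val) := by
      ext (i | i) (j | j)
      · rfl
      · exact hA.2 i.1 j.1 (hne i j) (hno i.1 i.2 j.1 j.2).1
      · exact hA.2 i.1 j.1 (Ne.symm (hne j i)) (hno j.1 j.2 i.1 i.2).2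
      · rfl
    calc minrank F (fun u v : S₁ => E u.1 v.1) + minrank F (fun u v : S₂ => E u.1 v.1)
        ≤ (A.submatrix (Subtype.val : S₁ → V) Subtype.val).rank
            + (A.submatrix (Subtype.val : S₂ → V) Subtype.val).rank :=
          add_le_add (minrank_le_of_fits fits1) (minrank_le_of_fits fits2)
      _ = (A.submatrix (Sum.elim (Subtype.val : S₁ → V) (Subtype.val : S₂ → V))
            (Sum.elim (Subtype.val : S₁ → V) (Subtype.val : S₂ → V))).rank := by
          rw [key, rank_fromBlocks_diag]
      _ ≤ A.rank := rank_submatrix_le' _ _ _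
  · -- upper bound
    obtain ⟨A₁, hA₁, hr₁⟩ := exists_fits_rank_eq (F := F) (fun u v : S₁ => E u.1 v.1)
    obtain ⟨A₂, hA₂, hr₂⟩ := exists_fits_rank_eq (F := F) (fun u v : S₂ => E u.1 v.1)
    set f : (S₁ ⊕ S₂) ⊕ Unit → V := Sum.elim (Sum.elim Subtype.val Subtype.val) (fun _ => k)
      with hf
    have hkne1 : ∀ u : S₁, (u : V) ≠ k := fun u h => hk1 (h ▸ u.2)
    have hkne2 : ∀ u : S₂, (u : V) ≠ k := fun u h => hk2 (h ▸ u.2)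
    have hbij : Function.Bijective f := by
      constructor
      · rintro ((a | a) | a) ((b | b) | b) h <;>
          simp only [hf, Sum.elim_inl, Sum.elim_inr] at h
        · exact congrArg (Sum.inl ∘ Sum.inl) (Subtype.ext h)
        · exact absurd h (hne a b)
        · exact absurd h (hkne1 a)
        · exact absurd h (Ne.symm (hne b a))
        · exact congrArg (Sum.inl ∘ Sum.inr) (Subtype.ext h)
        · exact absurd h (hkne2 a)
        · exact absurd h (Ne.symm (hkne1 b))
        · exact absurd h (Ne.symm (hkne2 b))
        · rfl
      · intro v
        have hv : v ∈ S₁ ∪ S₂ ∪ {k} := hcover ▸ Set.mem_univ v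
        rcases hv with (h | h) | h
        · exact ⟨Sum.inl (Sum.inl ⟨v, h⟩), rfl⟩
        · exact ⟨Sum.inl (Sum.inr ⟨v, h⟩), rfl⟩
        · exact ⟨Sum.inr (), h.symm⟩
    set e : ((S₁ ⊕ S₂) ⊕ Unit) ≃ V := Equiv.ofBijective f hbij with he
    set B : Matrix ((S₁ ⊕ S₂) ⊕ Unit) ((S₁ ⊕ S₂) ⊕ Unit) F :=
      Matrix.fromBlocks (Matrix.fromBlocks A₁ 0 0 A₂) 0 0 (1 : Matrix Unit Unit F) with hB
    set M : Matrix V V F := Matrix.reindex e e B with hM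
    have happ : ∀ a, e a = f a := fun a => rfl
    have hMapp : ∀ u v, M u v = B (e.symm u) (e.symm v) := fun u v => rfl
    have hfits : Fits E M := by
      constructor
      · intro v
        rw [hMapp]
        rcases ha : e.symm v with (i | i) | i
        · exact hA₁.1 i
        · exact hA₂.1 i
        · exact Matrix.one_apply_eq i
      · intro u v huv hE
        rw [hMapp]
        have hu : u = e (e.symm u) := (e.apply_symm_apply u).symm
        have hv : v = e (e.symm v) := (e.apply_symm_apply v).symm
        rcases ha : e.symm u with (i | i) | i <;> rcases hb : e.symm v with (j | j) | j <;>
            rw [ha] at hu <;> rw [hb] at hv <;>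
            rw [happ] at hu hv <;>
            simp only [hf, Sum.elim_inl, Sum.elim_inr] at hu hv
        · -- S₁ S₁
          refine hA₁.2 i j (fun h => huv ?_) (fun h => hE ?_)
          · rw [hu, hv, h]
          · rw [hu, hv] at hE ⊢; exact h
        · rfl
        · rfl
        · rfl
        · refine hA₂.2 i j (fun h => huv ?_) (fun h => hE ?_)
          · rw [hu, hv, h]
          · rw [hu, hv] at hE ⊢; exact h
        · rfl
        · rfl
        · rfl
        · exact absurd (hu.trans hv.symm) huv
    have hrank : M.rank = minrank F (fun u v : S₁ => E u.1 v.1)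
        + minrank F (fun u v : S₂ => E u.1 v.1) + 1 := by
      rw [hM, Matrix.rank_reindex, hB, rank_fromBlocks_diag, rank_fromBlocks_diag,
        hr₁, hr₂, Matrix.rank_one]
      simp
    exact hrank ▸ minrank_le_of_fits hfits
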